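/- Let R be a commutative ring and X an indeterminate over R. If the polynomial ring R[X] is a weakly Laskerian ring, then the prime spectrum Spec R (with the Zariski topology) is a Noetherian topological space. -/

import Mathlib

/-- An `R`-module `M` is *weakly Laskerian* if every quotient of `M` has only finitely many
associated prime ideals. -/
def IsWeaklyLaskerian (R : Type*) [CommRing R] (M : Type*) [AddCommGroup M]
    [Module R M] : Prop :=
  ∀ N : Submodule R M, (associatedPrimes R (M ⧸ N)).Finite

open Polynomial in
/-- Auxiliary lemma: given a monotone sequence of ideals `I n`, primes `x n ⊇ I n`, and
elements `a n ∈ I (n+1)` with `a n ∉ x n`, the ring `R[X]` is not weakly Laskerian. -/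
theorem IsWeaklyLaskerian.aux_false {R : Type*} [CommRing R]
    (h : IsWeaklyLaskerian (Polynomial R) (Polynomial R))
    (I : ℕ → Ideal R) (x : ℕ → PrimeSpectrum R) (a : ℕ → R)
    (hmono : Monotone I) (haI : ∀ n, a n ∈ I (n + 1))
    (hIx : ∀ n, I n ≤ (x n).asIdeal) (hax : ∀ n, a n ∉ (x n).asIdeal) : False := by
  classical
  -- the sequence of coefficient ideals
  set D : ℕ → Ideal R := fun n => Ideal.span {a n} * (x n).asIdeal + I n with hD
  have hDle : ∀ n, D n ≤ I (n + 1) := by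
    intro n
    refine sup_le (le_trans Ideal.mul_le_left ?_) (hmono (Nat.le_succ n))
    rw [Ideal.span_le, Set.singleton_subset_iff]
    exact haI n
  have hDmono : ∀ {j k : ℕ}, j ≤ k → D j ≤ D k := by
    intro j k hjk
    rcases eq_or_lt_of_le hjk with rfl | hlt
    · exact le_rfl
    · exact le_trans (hDle j) (le_trans (hmono hlt) le_sup_right)
  -- the ideal of polynomials whose k-th coefficient lies in D k
  set K : Ideal (Polynomial R) :=
    { carrier := {f | ∀ k, f.coeff k ∈ D k}
      add_mem' := fun hf hg k => by
        rw [coeff_add]; exact add_mem (hf k) (hg k)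
      zero_mem' := fun k => by rw [coeff_zero]; exact zero_mem _
      smul_mem' := fun g f hf k => by
        rw [smul_eq_mul, coeff_mul]
        refine Submodule.sum_mem _ fun p hp => ?_
        have hp2 : p.2 ≤ k := by
          have := Finset.HasAntidiagonal.mem_antidiagonal.mp hp
          omega
        exact Ideal.mul_mem_left _ _ (hDmono hp2 (hf p.2)) } with hK
  have memK : ∀ f : Polynomial R, f ∈ K ↔ ∀ k, f.coeff k ∈ D k := fun _ => Iff.rfl
  -- the associated primes
  set P : ℕ → Ideal (Polynomial R) :=
    fun n => ((x n).asIdeal).comap (constantCoeff : Polynomial R →+* R) with hP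
  have memP : ∀ (n : ℕ) (g : Polynomial R), g ∈ P n ↔ g.coeff 0 ∈ (x n).asIdeal := by
    intro n g
    rw [hP, Ideal.mem_comap, constantCoeff_apply]
  have hPprime : ∀ n, (P n).IsPrime := fun n => letI := (x n).2; Ideal.IsPrime.comap _
  have haIm : ∀ {n m : ℕ}, n < m → a n ∈ (x m).asIdeal := fun {n m} hnm =>
    hIx m (hmono hnm (haI n))
  -- each P n is an associated prime of R[X] ⧸ K
  have hassoc : ∀ n, P n ∈ associatedPrimes (Polynomial R) (Polynomial R ⧸ K) := by
    intro n
    refine ⟨hPprime n, Submodule.Quotient.mk (C (a n) * X ^ n), ?_⟩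
    suffices hann : P n = (⊥ : Submodule (Polynomial R) (Polynomial R ⧸ K)).colon
        {Submodule.Quotient.mk (C (a n) * X ^ n)} by rw [← hann, (hPprime n).radical]
    ext g
    rw [Submodule.mem_colon_singleton, Submodule.mem_bot, ← Submodule.Quotient.mk_smul,
      Submodule.Quotient.mk_eq_zero, memP]
    have hcoeff : ∀ k, (g • (C (a n) * X ^ n)).coeff k
        = if n ≤ k then g.coeff (k - n) * a n else 0 := by
      intro k
      rw [smul_eq_mul, show g * (C (a n) * X ^ n) = g * C (a n) * X ^ n from (mul_assoc _ _ _).symm,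
        coeff_mul_X_pow', ]
      split
      · rw [coeff_mul_C]
      · rfl
    constructor
    · intro hg
      refine (memK _).mpr fun k => ?_
      rw [hcoeff k]
      split
      · rename_i hnk
        rcases eq_or_lt_of_le hnk with rfl | hlt
        · rw [Nat.sub_self]
          refine Submodule.mem_sup_left (Submodule.mem_span_singleton_mul.mpr ?_)
          exact ⟨g.coeff 0, hg, mul_comm _ _⟩
        · refine Submodule.mem_sup_right ?_
          exact Ideal.mul_mem_left _ _ (hmono hlt (haI n))
      · exact zero_mem _
    · intro hg
      replace hg := (memK _).mp hg
      have h0 := hg n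
      rw [hcoeff n, if_pos le_rfl, Nat.sub_self] at h0
      rcases Submodule.mem_sup.mp h0 with ⟨y, hy, z, hz, hyz⟩
      rcases Submodule.mem_span_singleton_mul.mp hy with ⟨c, hc, hac⟩
      have hsub : a n * (g.coeff 0 - c) ∈ (x n).asIdeal := by
        have : a n * (g.coeff 0 - c) = z := by
          rw [mul_sub, mul_comm (a n) (g.coeff 0), hac]
          rw [← hyz]; ring
        rw [this]
        exact hIx n hz
      rcases (x n).2.mem_or_mem hsub with hmem | hmem
      · exact absurd hmem (hax n)
      · have : g.coeff 0 = (g.coeff 0 - c) + c := by ring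
        rw [this]
        exact Ideal.add_mem _ hmem hc
  -- the P n are pairwise distinct
  have hlt_ne : ∀ {n m : ℕ}, n < m → P n ≠ P m := by
    intro n m hnm hEq
    have h1 : C (a n) ∈ P m := by
      rw [memP, coeff_C_zero]
      exact haIm hnm
    have h2 : C (a n) ∉ P n := by
      rw [memP, coeff_C_zero]
      exact hax n
    rw [hEq] at h2
    exact h2 h1
  have hinj : Function.Injective P := by
    intro n m hEq
    by_contra hne
    rcases lt_or_gt_of_ne hne with hlt | hlt
    · exact hlt_ne hlt hEq
    · exact hlt_ne hlt hEq.symm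
  exact (h K).not_infinite (Set.infinite_of_injective_forall_mem hinj hassoc)

/-- If the polynomial ring `R[X]` is a weakly Laskerian ring, then `Spec R` is a
Noetherian topological space. -/
theorem noetherianSpace_of_weaklyLaskerian_polynomial {R : Type*} [CommRing R]
    (h : IsWeaklyLaskerian (Polynomial R) (Polynomial R)) :
    TopologicalSpace.NoetherianSpace (PrimeSpectrum R) := by
  by_contra hns
  -- extract a strictly increasing sequence of open sets
  have hwf : ¬ WellFounded ((· > ·) : TopologicalSpace.Opens (PrimeSpectrum R) →
      TopologicalSpace.Opens (PrimeSpectrum R) → Prop) := fun hw => hns ⟨hw⟩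
  rw [RelEmbedding.wellFounded_iff_isEmpty, not_isEmpty_iff] at hwf
  obtain ⟨e⟩ := hwf
  have hU : ∀ n : ℕ, e n < e (n + 1) := fun n => e.map_rel_iff.mpr (Nat.lt_succ_self n)
  -- pass to complements (closed sets) and their vanishing ideals
  set C : ℕ → Set (PrimeSpectrum R) := fun n => ((e n : Set (PrimeSpectrum R)))ᶜ with hC
  have hCclosed : ∀ n, IsClosed (C n) := fun n => (e n).2.isClosed_compl
  have hCanti : ∀ n, C (n + 1) ⊂ C n := by
    intro n
    exact compl_lt_compl_iff_lt.mpr (SetLike.coe_ssubset_coe.mpr (hU n))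
  set I : ℕ → Ideal R := fun n => PrimeSpectrum.vanishingIdeal (C n) with hI
  have hIlt : ∀ n, I n < I (n + 1) := fun n =>
    (PrimeSpectrum.vanishingIdeal_strict_anti_mono_iff (hCclosed (n + 1)) (hCclosed n)).mp
      (hCanti n)
  have hmono : Monotone I := monotone_nat_of_le_succ fun n => (hIlt n).le
  -- choose witnesses
  have hchoice : ∀ n, ∃ p : R × PrimeSpectrum R,
      p.1 ∈ I (n + 1) ∧ I n ≤ p.2.asIdeal ∧ p.1 ∉ p.2.asIdeal := by
    intro n
    obtain ⟨b, hb1, hb2⟩ := SetLike.exists_of_lt (hIlt n)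
    rw [hI, PrimeSpectrum.mem_vanishingIdeal] at hb2
    push_neg at hb2
    obtain ⟨y, hyC, hy⟩ := hb2
    refine ⟨⟨b, y⟩, hb1, ?_, hy⟩
    intro f hf
    exact (PrimeSpectrum.mem_vanishingIdeal _ _).mp hf y hyC
  choose p hp1 hp2 hp3 using hchoice
  exact h.aux_false I (fun n => (p n).2) (fun n => (p n).1) hmono hp1 hp2 hp3
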